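/- In the example G = ⟨σ₁,σ₂,σ₃⟩ ≅ (Z/2Z)³ acting on V = F₂⁴ as above, the direct summand property fails: for the ideal J = (x₁, x₂) of k[V]^G, the invariant f₃ = x₁x₃(x₁+x₃) + x₂x₄(x₂+x₄) lies in the contraction (J·k[V]) ∩ k[V]^G but not in J, so J ≠ J^{ec}; hence there is no surjective k[V]^G-linear projection k[V] → k[V]^G. Equivalently, Tr^G(f/θ_G) = 0 for every f ∈ k[V] of degree 3, where θ_G = x₁x₂(x₁+x₂). -/

import Mathlib

open MvPolynomial

set_option synthInstance.maxHeartbeats 1000000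
set_option maxHeartbeats 1000000

variable {k : Type*} [Field k] {ι : Type*} [Fintype ι] [DecidableEq ι]

noncomputable def galAct (M : Matrix.GeneralLinearGroup ι k) :
    MvPolynomial ι k →ₐ[k] MvPolynomial ι k :=
  aeval fun i => ∑ j, (((M⁻¹ : Matrix.GeneralLinearGroup ι k) : Matrix ι ι k) i j) • X j

def invariants (G : Subgroup (Matrix.GeneralLinearGroup ι k)) :
    Subalgebra k (MvPolynomial ι k) where
  carrier := {p | ∀ σ ∈ G, galAct σ p = p}
  mul_mem' := fun ha hb σ hσ => by rw [map_mul, ha σ hσ, hb σ hσ]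
  add_mem' := fun ha hb σ hσ => by rw [map_add, ha σ hσ, hb σ hσ]
  algebraMap_mem' := fun r σ hσ => by simp [galAct]

noncomputable def fixedSpace (M : Matrix.GeneralLinearGroup ι k) : Submodule k (ι → k) :=
  LinearMap.ker (Matrix.mulVecLin ((M : Matrix ι ι k) - 1))

noncomputable def moveSpace (M : Matrix.GeneralLinearGroup ι k) : Submodule k (ι → k) :=
  LinearMap.range (Matrix.mulVecLin ((M : Matrix ι ι k) - 1))

def IsPseudoReflection (M : Matrix.GeneralLinearGroup ι k) : Prop :=
  Module.finrank k (moveSpace M) = 1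

def IsTransvection (M : Matrix.GeneralLinearGroup ι k) : Prop :=
  IsPseudoReflection M ∧ moveSpace M ≤ fixedSpace M

noncomputable def linForm (y : Module.Dual k (ι → k)) : MvPolynomial ι k :=
  ∑ i, C (y (Pi.single i 1)) * X i

noncomputable def hilbertIdeal (G : Subgroup (Matrix.GeneralLinearGroup ι k)) :
    Ideal (MvPolynomial ι k) :=
  Ideal.span {p | p ∈ invariants G ∧ ∃ d, 0 < d ∧ p.IsHomogeneous d}

def DSP (G : Subgroup (Matrix.GeneralLinearGroup ι k)) : Prop :=
  ∃ π : MvPolynomial ι k →ₗ[↥(invariants G)] ↥(invariants G),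
    Function.Surjective π ∧
    ∀ (p : MvPolynomial ι k) (d : ℕ), p.IsHomogeneous d →
      ((π p : MvPolynomial ι k)).IsHomogeneous d

noncomputable def fixedSubmodule (G : Subgroup (Matrix.GeneralLinearGroup ι k)) :
    Submodule k (ι → k) := ⨅ σ ∈ G, fixedSpace σ

/-- `σ₁ = I + E₃₁` over `F₂`. -/
def M1 : Matrix (Fin 4) (Fin 4) (ZMod 2) := !![1,0,0,0; 0,1,0,0; 1,0,1,0; 0,0,0,1]
/-- `σ₂ = I + E₄₂` over `F₂`. -/
def M2 : Matrix (Fin 4) (Fin 4) (ZMod 2) := !![1,0,0,0; 0,1,0,0; 0,0,1,0; 0,1,0,1]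
/-- `σ₃ = I + E₃₁ + E₃₂ + E₄₁ + E₄₂` over `F₂`. -/
def M3 : Matrix (Fin 4) (Fin 4) (ZMod 2) := !![1,0,0,0; 0,1,0,0; 1,1,1,0; 1,1,0,1]

def s1 : Matrix.GeneralLinearGroup (Fin 4) (ZMod 2) := ⟨M1, M1, by decide, by decide⟩
def s2 : Matrix.GeneralLinearGroup (Fin 4) (ZMod 2) := ⟨M2, M2, by decide, by decide⟩
def s3 : Matrix.GeneralLinearGroup (Fin 4) (ZMod 2) := ⟨M3, M3, by decide, by decide⟩

/-- The invariant `f₃ = x₁x₃(x₁+x₃) + x₂x₄(x₂+x₄)`. -/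
noncomputable def f₃ : MvPolynomial (Fin 4) (ZMod 2) :=
  X 0 * X 2 * (X 0 + X 2) + X 1 * X 3 * (X 1 + X 3)

/-! ### general facts about `galAct` -/

lemma galAct_one (p : MvPolynomial ι k) : galAct 1 p = p := by
  simp [galAct, Matrix.one_apply, ite_smul]

lemma galAct_mul (M N : Matrix.GeneralLinearGroup ι k) (p : MvPolynomial ι k) :
    galAct (M * N) p = galAct M (galAct N p) := by
  show aeval _ p = (galAct M) ((aeval _) p)
  rw [← AlgHom.comp_apply, comp_aeval]
  have : (fun i => ∑ j, (((M * N)⁻¹ : Matrix.GeneralLinearGroup ι k) : Matrix ι ι k) i j • X j)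
      = fun i => (galAct M) (∑ j, ((N⁻¹ : Matrix.GeneralLinearGroup ι k) : Matrix ι ι k) i j
          • (X j : MvPolynomial ι k)) := by
    funext i
    simp only [map_sum, map_smul, galAct, aeval_X, mul_inv_rev, Units.val_mul, Matrix.mul_apply,
      Finset.sum_smul, Finset.smul_sum, mul_smul]
    rw [Finset.sum_comm]
  rw [this]

/-- the stabilizer of a polynomial, as a subgroup -/
noncomputable def stab (p : MvPolynomial ι k) : Subgroup (Matrix.GeneralLinearGroup ι k) where
  carrier := {σ | galAct σ p = p}
  one_mem' := galAct_one p
  mul_mem' := fun {x y} hx hy => by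
    have : galAct (x * y) p = galAct x (galAct y p) := galAct_mul x y p
    simp only [Set.mem_setOf_eq] at *
    rw [this, hy, hx]
  inv_mem' := fun {x} hx => by
    simp only [Set.mem_setOf_eq] at *
    calc galAct x⁻¹ p = galAct x⁻¹ (galAct x p) := by rw [hx]
    _ = galAct (x⁻¹ * x) p := (galAct_mul _ _ p).symm
    _ = p := by rw [inv_mul_cancel, galAct_one]

lemma mem_invariants_closure {p : MvPolynomial (Fin 4) (ZMod 2)}
    (h1 : galAct s1 p = p) (h2 : galAct s2 p = p) (h3 : galAct s3 p = p) :
    p ∈ invariants (Subgroup.closure {s1, s2, s3}) := by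
  intro σ hσ
  have hle : Subgroup.closure {s1, s2, s3} ≤ stab p := by
    rw [Subgroup.closure_le]
    rintro x hx
    simp only [Set.mem_insert_iff, Set.mem_singleton_iff] at hx
    rcases hx with rfl | rfl | rfl
    · exact h1
    · exact h2
    · exact h3
  exact hle hσ

lemma galAct_s1_X0 : galAct s1 (X 0 : MvPolynomial (Fin 4) (ZMod 2)) = X 0 := by
  simp [galAct, s1, Units.inv_mk, M1, Fin.sum_univ_four]
lemma galAct_s2_X0 : galAct s2 (X 0 : MvPolynomial (Fin 4) (ZMod 2)) = X 0 := by
  simp [galAct, s2, Units.inv_mk, M2, Fin.sum_univ_four]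
lemma galAct_s3_X0 : galAct s3 (X 0 : MvPolynomial (Fin 4) (ZMod 2)) = X 0 := by
  simp [galAct, s3, Units.inv_mk, M3, Fin.sum_univ_four]
lemma galAct_s1_X1 : galAct s1 (X 1 : MvPolynomial (Fin 4) (ZMod 2)) = X 1 := by
  simp [galAct, s1, Units.inv_mk, M1, Fin.sum_univ_four]
lemma galAct_s2_X1 : galAct s2 (X 1 : MvPolynomial (Fin 4) (ZMod 2)) = X 1 := by
  simp [galAct, s2, Units.inv_mk, M2, Fin.sum_univ_four]
lemma galAct_s3_X1 : galAct s3 (X 1 : MvPolynomial (Fin 4) (ZMod 2)) = X 1 := by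
  simp [galAct, s3, Units.inv_mk, M3, Fin.sum_univ_four]

lemma two_eq_zero : (2 : MvPolynomial (Fin 4) (ZMod 2)) = 0 := by
  exact_mod_cast CharP.cast_eq_zero (MvPolynomial (Fin 4) (ZMod 2)) 2

lemma galAct_s1_f3 : galAct s1 f₃ = f₃ := by
  simp only [f₃, map_add, map_mul, galAct, s1, Units.inv_mk, aeval_X]
  simp [M1, Fin.sum_univ_four]
  linear_combination (X 0 ^ 2 * X 2 + X 0 ^ 3 : MvPolynomial (Fin 4) (ZMod 2)) * two_eq_zero

lemma galAct_s2_f3 : galAct s2 f₃ = f₃ := by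
  simp only [f₃, map_add, map_mul, galAct, s2, Units.inv_mk, aeval_X]
  simp [M2, Fin.sum_univ_four]
  linear_combination (X 1 ^ 2 * X 3 + X 1 ^ 3 : MvPolynomial (Fin 4) (ZMod 2)) * two_eq_zero

lemma galAct_s3_f3 : galAct s3 f₃ = f₃ := by
  simp only [f₃, map_add, map_mul, galAct, s3, Units.inv_mk, aeval_X]
  simp [M3, Fin.sum_univ_four]
  linear_combination (X 0 ^ 3 + X 1 ^ 3 + 2 * X 0 ^ 2 * X 1 + 2 * X 0 * X 1 ^ 2 + X 0 ^ 2 * X 2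
    + X 0 * X 1 * X 2 + X 1 ^ 2 * X 3 + X 0 * X 1 * X 3 : MvPolynomial (Fin 4) (ZMod 2)) * two_eq_zero

/-! ### coefficient extraction machinery -/

noncomputable abbrev PP := Polynomial (Polynomial (ZMod 2))

noncomputable def mm (i j : Fin 4) : Fin 4 →₀ ℕ := Finsupp.single i 1 + Finsupp.single j 1

lemma mm_apply (i j x : Fin 4) : mm i j x = (if i = x then 1 else 0) + (if j = x then 1 else 0) := by
  simp [mm, Finsupp.single_apply]

lemma finsupp_eq_iff (v w : Fin 4 →₀ ℕ) : v = w ↔ (v 0 = w 0 ∧ v 1 = w 1 ∧ v 2 = w 2 ∧ v 3 = w 3) := by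
  constructor
  · rintro rfl; exact ⟨rfl, rfl, rfl, rfl⟩
  · rintro ⟨h0, h1, h2, h3⟩
    ext x
    fin_cases x <;> assumption

lemma step1 (q : Fin 4 → Polynomial (ZMod 2)) (e : ℕ) (c : ZMod 2) (v : Fin 4 →₀ ℕ) :
    ((aeval (fun i => (Polynomial.C (q i) * Polynomial.X : PP)) ((monomial v) c)).coeff 2).coeff e
      = if v 0 + v 1 + v 2 + v 3 = 2 then c * (q 0 ^ v 0 * q 1 ^ v 1 * q 2 ^ v 2 * q 3 ^ v 3).coeff e else 0 := by
  rw [MvPolynomial.aeval_monomial, Finsupp.prod_pow]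
  have h1 : (algebraMap (ZMod 2) PP c) * ∏ i : Fin 4, (Polynomial.C (q i) * Polynomial.X) ^ v i
      = Polynomial.C (Polynomial.C c * (q 0 ^ v 0 * q 1 ^ v 1 * q 2 ^ v 2 * q 3 ^ v 3)) * (Polynomial.X : PP) ^ (v 0 + v 1 + v 2 + v 3) := by
    simp only [Fin.prod_univ_four, mul_pow, ← Polynomial.C_pow, Polynomial.algebraMap_eq, map_mul,
      Polynomial.algebraMap_apply, pow_add]
    simp [Polynomial.algebraMap_eq]
    ring
  rw [h1, Polynomial.coeff_C_mul, Polynomial.coeff_X_pow]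
  rw [mul_ite, mul_one, mul_zero, apply_ite (fun (r : Polynomial (ZMod 2)) => r.coeff e)]
  simp only [Polynomial.coeff_C_mul, Polynomial.coeff_zero]
  by_cases h : v 0 + v 1 + v 2 + v 3 = 2
  · rw [if_pos h, if_pos h.symm]
  · rw [if_neg h, if_neg (fun hh => h hh.symm)]

lemma mm_sum (i j : Fin 4) : (mm i j) 0 + (mm i j) 1 + (mm i j) 2 + (mm i j) 3 = 2 := by
  fin_cases i <;> fin_cases j <;> simp [mm_apply]

lemma step2 (q : Fin 4 → Polynomial (ZMod 2)) (e : ℕ) (c : ZMod 2) (v : Fin 4 →₀ ℕ) :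
    (if v 0 + v 1 + v 2 + v 3 = 2 then c * (q 0 ^ v 0 * q 1 ^ v 1 * q 2 ^ v 2 * q 3 ^ v 3).coeff e else 0)
    = (if v = mm 0 0 then c * (q 0 * q 0).coeff e else 0)
    + (if v = mm 0 1 then c * (q 0 * q 1).coeff e else 0)
    + (if v = mm 0 2 then c * (q 0 * q 2).coeff e else 0)
    + (if v = mm 0 3 then c * (q 0 * q 3).coeff e else 0)
    + (if v = mm 1 1 then c * (q 1 * q 1).coeff e else 0)
    + (if v = mm 1 2 then c * (q 1 * q 2).coeff e else 0)
    + (if v = mm 1 3 then c * (q 1 * q 3).coeff e else 0)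
    + (if v = mm 2 2 then c * (q 2 * q 2).coeff e else 0)
    + (if v = mm 2 3 then c * (q 2 * q 3).coeff e else 0)
    + (if v = mm 3 3 then c * (q 3 * q 3).coeff e else 0) := by
  by_cases h : v 0 + v 1 + v 2 + v 3 = 2
  · rw [if_pos h]
    simp only [finsupp_eq_iff, mm_apply]
    revert h
    generalize v 0 = a
    generalize v 1 = b
    generalize v 2 = c2
    generalize v 3 = d
    intro h
    have ha : a ≤ 2 := by omega
    have hb : b ≤ 2 := by omega
    have hc : c2 ≤ 2 := by omega
    have hd : d ≤ 2 := by omega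
    interval_cases a <;> interval_cases b <;> interval_cases c2 <;> interval_cases d <;>
      first
        | omega
        | simp [sq]
  · rw [if_neg h]
    have hne : ∀ i j : Fin 4, ¬ (v = mm i j) := by
      intro i j hv
      exact h (by rw [hv]; exact mm_sum i j)
    simp [hne]

lemma lam2 (q : Fin 4 → Polynomial (ZMod 2)) (p : MvPolynomial (Fin 4) (ZMod 2)) (e : ℕ) :
    ((aeval (fun i => (Polynomial.C (q i) * Polynomial.X : PP)) p).coeff 2).coeff e
    = coeff (mm 0 0) p * (q 0 * q 0).coeff e
    + coeff (mm 0 1) p * (q 0 * q 1).coeff e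
    + coeff (mm 0 2) p * (q 0 * q 2).coeff e
    + coeff (mm 0 3) p * (q 0 * q 3).coeff e
    + coeff (mm 1 1) p * (q 1 * q 1).coeff e
    + coeff (mm 1 2) p * (q 1 * q 2).coeff e
    + coeff (mm 1 3) p * (q 1 * q 3).coeff e
    + coeff (mm 2 2) p * (q 2 * q 2).coeff e
    + coeff (mm 2 3) p * (q 2 * q 3).coeff e
    + coeff (mm 3 3) p * (q 3 * q 3).coeff e := by
  classical
  have key : ∀ (w : Fin 4 →₀ ℕ) (z : Polynomial (ZMod 2)),
      (∑ v ∈ p.support, if v = w then coeff v p * z.coeff e else 0) = coeff w p * z.coeff e := by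
    intro w z
    rw [Finset.sum_ite_eq' p.support w (fun v => coeff v p * z.coeff e)]
    by_cases hw : w ∈ p.support
    · rw [if_pos hw]
    · rw [if_neg hw]
      simp [MvPolynomial.notMem_support_iff.mp hw]
  have h0 : ((aeval (fun i => (Polynomial.C (q i) * Polynomial.X : PP)) p).coeff 2).coeff e
      = ∑ v ∈ p.support,
        (((MvPolynomial.aeval (fun i => (Polynomial.C (q i) * Polynomial.X : PP))) ((monomial v) (coeff v p))).coeff 2).coeff e := by
    conv_lhs => rw [p.as_sum]
    rw [map_sum, Polynomial.finset_sum_coeff, Polynomial.finset_sum_coeff]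
  rw [h0]
  have h1 : ∀ v ∈ p.support,
      (((MvPolynomial.aeval (fun i => (Polynomial.C (q i) * Polynomial.X : PP))) ((monomial v) (coeff v p))).coeff 2).coeff e
      = (if v = mm 0 0 then coeff v p * (q 0 * q 0).coeff e else 0)
      + (if v = mm 0 1 then coeff v p * (q 0 * q 1).coeff e else 0)
      + (if v = mm 0 2 then coeff v p * (q 0 * q 2).coeff e else 0)
      + (if v = mm 0 3 then coeff v p * (q 0 * q 3).coeff e else 0)
      + (if v = mm 1 1 then coeff v p * (q 1 * q 1).coeff e else 0)
      + (if v = mm 1 2 then coeff v p * (q 1 * q 2).coeff e else 0)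
      + (if v = mm 1 3 then coeff v p * (q 1 * q 3).coeff e else 0)
      + (if v = mm 2 2 then coeff v p * (q 2 * q 2).coeff e else 0)
      + (if v = mm 2 3 then coeff v p * (q 2 * q 3).coeff e else 0)
      + (if v = mm 3 3 then coeff v p * (q 3 * q 3).coeff e else 0) := by
    intro v _
    rw [step1, step2]
  rw [Finset.sum_congr rfl h1]
  simp only [Finset.sum_add_distrib]
  rw [key, key, key, key, key, key, key, key, key, key]

/-! ### the bridge between invariance and coefficient identities -/

noncomputable def qid : Fin 4 → Polynomial (ZMod 2) :=
  ![Polynomial.X^1, Polynomial.X^4, Polynomial.X^16, Polynomial.X^64]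
noncomputable def qA : Fin 4 → Polynomial (ZMod 2) :=
  ![Polynomial.X^1, Polynomial.X^4, Polynomial.X^1+Polynomial.X^16, Polynomial.X^64]
noncomputable def qB : Fin 4 → Polynomial (ZMod 2) :=
  ![Polynomial.X^1, Polynomial.X^4, Polynomial.X^16, Polynomial.X^4+Polynomial.X^64]
noncomputable def qC : Fin 4 → Polynomial (ZMod 2) :=
  ![Polynomial.X^1, Polynomial.X^4, Polynomial.X^1+Polynomial.X^4+Polynomial.X^16,
    Polynomial.X^1+Polynomial.X^4+Polynomial.X^64]

lemma bridge (s : Matrix.GeneralLinearGroup (Fin 4) (ZMod 2)) (qs : Fin 4 → Polynomial (ZMod 2))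
    (h : ∀ i : Fin 4, (MvPolynomial.aeval (fun i => (Polynomial.C (qid i) * Polynomial.X : PP)))
      (galAct s (X i)) = Polynomial.C (qs i) * Polynomial.X)
    (a : MvPolynomial (Fin 4) (ZMod 2)) (ha : galAct s a = a) :
    (aeval (fun i => (Polynomial.C (qs i) * Polynomial.X : PP))) a
      = (aeval (fun i => (Polynomial.C (qid i) * Polynomial.X : PP))) a := by
  have hcomp : ((aeval (fun i => (Polynomial.C (qid i) * Polynomial.X : PP))).comp (galAct s))
      = aeval (fun i => (Polynomial.C (qs i) * Polynomial.X : PP)) :=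
    MvPolynomial.algHom_ext (fun i => by rw [AlgHom.comp_apply, MvPolynomial.aeval_X]; exact h i)
  rw [← hcomp, AlgHom.comp_apply, ha]

lemma hA : ∀ i : Fin 4, (MvPolynomial.aeval (fun i => (Polynomial.C (qid i) * Polynomial.X : PP)))
    (galAct s1 (X i)) = Polynomial.C (qA i) * Polynomial.X := by
  intro i
  fin_cases i <;>
    simp [galAct, s1, Units.inv_mk, M1, Fin.sum_univ_four, qid, qA, map_add, Matrix.vecHead, Matrix.vecTail] <;> ring

lemma hB : ∀ i : Fin 4, (MvPolynomial.aeval (fun i => (Polynomial.C (qid i) * Polynomial.X : PP)))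
    (galAct s2 (X i)) = Polynomial.C (qB i) * Polynomial.X := by
  intro i
  fin_cases i <;>
    simp [galAct, s2, Units.inv_mk, M2, Fin.sum_univ_four, qid, qB, map_add, Matrix.vecHead, Matrix.vecTail] <;> ring

lemma hC : ∀ i : Fin 4, (MvPolynomial.aeval (fun i => (Polynomial.C (qid i) * Polynomial.X : PP)))
    (galAct s3 (X i)) = Polynomial.C (qC i) * Polynomial.X := by
  intro i
  fin_cases i <;>
    simp [galAct, s3, Units.inv_mk, M3, Fin.sum_univ_four, qid, qC, map_add, Matrix.vecHead, Matrix.vecTail] <;> ring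

lemma coeff3_mulCX (P : PP) (r : Polynomial (ZMod 2)) :
    (P * (Polynomial.C r * Polynomial.X)).coeff 3 = P.coeff 2 * r := by
  rw [← mul_assoc, show (3 : ℕ) = 2 + 1 from rfl, Polynomial.coeff_mul_X,
    Polynomial.coeff_mul_C]

lemma main_contra (a b : MvPolynomial (Fin 4) (ZMod 2))
    (ha1 : galAct s1 a = a) (ha2 : galAct s2 a = a) (ha3 : galAct s3 a = a)
    (heq : a * X 0 + b * X 1 = f₃) : False := by
  have key1 := bridge s1 qA hA a ha1
  have key2 := bridge s2 qB hB a ha2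
  have key3 := bridge s3 qC hC a ha3
  -- E2 : from s1 at t^65
  have E2 : coeff (mm 2 3) a = 0 := by
    have h : (((aeval (fun i => (Polynomial.C (qA i) * Polynomial.X : PP))) a).coeff 2).coeff 65
        = (((aeval (fun i => (Polynomial.C (qid i) * Polynomial.X : PP))) a).coeff 2).coeff 65 := by
      rw [key1]
    rw [lam2, lam2] at h
    norm_num [qA, qid, mul_add, add_mul, ← pow_add, Polynomial.coeff_add, Polynomial.coeff_X_pow, Polynomial.coeff_X, Matrix.cons_val_two, Matrix.cons_val_three, Matrix.vecHead, Matrix.vecTail] at h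
    linear_combination h
  -- E3 : from s1 at t^5
  have E3 : coeff (mm 1 2) a = 0 := by
    have h : (((aeval (fun i => (Polynomial.C (qA i) * Polynomial.X : PP))) a).coeff 2).coeff 5
        = (((aeval (fun i => (Polynomial.C (qid i) * Polynomial.X : PP))) a).coeff 2).coeff 5 := by
      rw [key1]
    rw [lam2, lam2] at h
    norm_num [qA, qid, mul_add, add_mul, ← pow_add, Polynomial.coeff_add, Polynomial.coeff_X_pow, Polynomial.coeff_X, Matrix.cons_val_two, Matrix.cons_val_three, Matrix.vecHead, Matrix.vecTail] at h
    linear_combination h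
  -- E5 : from s2 at t^8
  have E5 : coeff (mm 1 3) a + coeff (mm 3 3) a = 0 := by
    have h : (((aeval (fun i => (Polynomial.C (qB i) * Polynomial.X : PP))) a).coeff 2).coeff 8
        = (((aeval (fun i => (Polynomial.C (qid i) * Polynomial.X : PP))) a).coeff 2).coeff 8 := by
      rw [key2]
    rw [lam2, lam2] at h
    norm_num [qB, qid, mul_add, add_mul, ← pow_add, Polynomial.coeff_add, Polynomial.coeff_X_pow, Polynomial.coeff_X, Matrix.cons_val_two, Matrix.cons_val_three, Matrix.vecHead, Matrix.vecTail] at h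
    linear_combination h
  -- E7 : from s3 at t^8
  have E7 : coeff (mm 1 2) a + coeff (mm 1 3) a + coeff (mm 2 2) a + coeff (mm 3 3) a
      + coeff (mm 2 3) a = 0 := by
    have h : (((aeval (fun i => (Polynomial.C (qC i) * Polynomial.X : PP))) a).coeff 2).coeff 8
        = (((aeval (fun i => (Polynomial.C (qid i) * Polynomial.X : PP))) a).coeff 2).coeff 8 := by
      rw [key3]
    rw [lam2, lam2] at h
    norm_num [qC, qid, mul_add, add_mul, ← pow_add, Polynomial.coeff_add, Polynomial.coeff_X_pow, Polynomial.coeff_X, Matrix.cons_val_two, Matrix.cons_val_three, Matrix.vecHead, Matrix.vecTail] at h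
    linear_combination h
  -- E8 : from the product identity at s^3 t^33
  have E8 : coeff (mm 2 2) a = 1 := by
    have hf3 : (aeval (fun i => (Polynomial.C (qid i) * Polynomial.X : PP))) f₃
        = Polynomial.C (Polynomial.X^18 + Polynomial.X^33 + Polynomial.X^72 + Polynomial.X^132)
            * Polynomial.X^3 := by
      simp only [f₃, map_add, map_mul, MvPolynomial.aeval_X]
      rw [show qid 0 = Polynomial.X ^ 1 from rfl, show qid 1 = Polynomial.X ^ 4 from rfl,
        show qid 2 = Polynomial.X ^ 16 from rfl, show qid 3 = Polynomial.X ^ 64 from rfl]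
      simp only [map_pow]
      ring
    have hrhs : (((Polynomial.C (Polynomial.X^18 + Polynomial.X^33 + Polynomial.X^72
        + Polynomial.X^132) * Polynomial.X^3 : PP)).coeff 3).coeff 33 = 1 := by
      rw [Polynomial.coeff_C_mul, Polynomial.coeff_X_pow]
      norm_num [Polynomial.coeff_add, Polynomial.coeff_X_pow]
    have h : (((aeval (fun i => (Polynomial.C (qid i) * Polynomial.X : PP))) (a * X 0 + b * X 1)).coeff 3).coeff 33
        = (((aeval (fun i => (Polynomial.C (qid i) * Polynomial.X : PP))) f₃).coeff 3).coeff 33 := by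
      rw [heq]
    rw [hf3, hrhs] at h
    rw [map_add, map_mul, map_mul, MvPolynomial.aeval_X, MvPolynomial.aeval_X] at h
    rw [Polynomial.coeff_add, coeff3_mulCX, coeff3_mulCX, Polynomial.coeff_add] at h
    rw [show qid 0 = Polynomial.X ^ 1 from rfl, show qid 1 = Polynomial.X ^ 4 from rfl] at h
    rw [pow_one] at h
    rw [show (33 : ℕ) = 32 + 1 from rfl, Polynomial.coeff_mul_X] at h
    rw [show (32 + 1 : ℕ) = 29 + 4 from rfl, Polynomial.coeff_mul_X_pow] at h
    rw [lam2, lam2] at h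
    norm_num [qid, mul_add, add_mul, ← pow_add, Polynomial.coeff_add, Polynomial.coeff_X_pow,
      Polynomial.coeff_X, Matrix.cons_val_two, Matrix.cons_val_three, Matrix.vecHead, Matrix.vecTail] at h
    linear_combination h
  have htwo : (2 : ZMod 2) = 0 := by decide
  have : (1 : ZMod 2) = 0 := by
    linear_combination E8 + E7 + E3 + E5 + E2 + (1 - coeff (mm 2 2) a - coeff (mm 1 2) a
      - coeff (mm 1 3) a - coeff (mm 3 3) a - coeff (mm 2 3) a) * htwo
  exact one_ne_zero this

lemma not_span (G : Subgroup (Matrix.GeneralLinearGroup (Fin 4) (ZMod 2)))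
    (hG : G = Subgroup.closure {s1, s2, s3})
    (h0 : X 0 ∈ invariants G) (h1 : X 1 ∈ invariants G) (hf : f₃ ∈ invariants G) :
    (⟨f₃, hf⟩ : ↥(invariants G)) ∉
      Ideal.span {(⟨X 0, h0⟩ : ↥(invariants G)), (⟨X 1, h1⟩ : ↥(invariants G))} := by
  intro hmem
  rw [Ideal.mem_span_pair] at hmem
  obtain ⟨A, B, hab⟩ := hmem
  have hab' : (A : MvPolynomial (Fin 4) (ZMod 2)) * X 0 + (B : MvPolynomial (Fin 4) (ZMod 2)) * X 1 = f₃ := by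
    have := congrArg (fun z : ↥(invariants G) => (z : MvPolynomial (Fin 4) (ZMod 2))) hab
    simpa using this
  have hs1 : s1 ∈ G := hG ▸ Subgroup.subset_closure (by simp)
  have hs2 : s2 ∈ G := hG ▸ Subgroup.subset_closure (by simp)
  have hs3 : s3 ∈ G := hG ▸ Subgroup.subset_closure (by simp)
  exact main_contra A B (A.2 s1 hs1) (A.2 s2 hs2) (A.2 s3 hs3) hab'


/-- In the example `G = ⟨σ₁,σ₂,σ₃⟩ ≅ (ℤ/2ℤ)³` acting on `V = F₂⁴`, the
direct summand property fails: `x₁`, `x₂` and `f₃ = x₁x₃(x₁+x₃) + x₂x₄(x₂+x₄)` are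
invariants, and for the ideal `J = (x₁, x₂)` of `k[V]^G` the invariant `f₃` lies in the
contraction `(J·k[V]) ∩ k[V]^G` of the extension of `J` but not in `J`, so `J ≠ J^{ec}`;
hence there is no surjective `k[V]^G`-linear map `k[V] → k[V]^G`. -/
theorem statement19 (G : Subgroup (Matrix.GeneralLinearGroup (Fin 4) (ZMod 2)))
    (hG : G = Subgroup.closure {s1, s2, s3}) :
    (X 0 ∈ invariants G ∧ X 1 ∈ invariants G ∧ f₃ ∈ invariants G) ∧
    (∀ (h0 : X 0 ∈ invariants G) (h1 : X 1 ∈ invariants G) (hf : f₃ ∈ invariants G),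
      (⟨f₃, hf⟩ : ↥(invariants G)) ∈
          Ideal.comap (algebraMap ↥(invariants G) (MvPolynomial (Fin 4) (ZMod 2)))
            (Ideal.map (algebraMap ↥(invariants G) (MvPolynomial (Fin 4) (ZMod 2)))
              (Ideal.span {(⟨X 0, h0⟩ : ↥(invariants G)), ⟨X 1, h1⟩})) ∧
        (⟨f₃, hf⟩ : ↥(invariants G)) ∉
          Ideal.span {(⟨X 0, h0⟩ : ↥(invariants G)), (⟨X 1, h1⟩ : ↥(invariants G))}) ∧
    ¬ ∃ π : MvPolynomial (Fin 4) (ZMod 2) →ₗ[↥(invariants G)] ↥(invariants G),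
        Function.Surjective π := by
  have h0 : (X 0 : MvPolynomial (Fin 4) (ZMod 2)) ∈ invariants G := by
    rw [hG]; exact mem_invariants_closure galAct_s1_X0 galAct_s2_X0 galAct_s3_X0
  have h1 : (X 1 : MvPolynomial (Fin 4) (ZMod 2)) ∈ invariants G := by
    rw [hG]; exact mem_invariants_closure galAct_s1_X1 galAct_s2_X1 galAct_s3_X1
  have hf : f₃ ∈ invariants G := by
    rw [hG]; exact mem_invariants_closure galAct_s1_f3 galAct_s2_f3 galAct_s3_f3
  refine ⟨⟨h0, h1, hf⟩, ?_, ?_⟩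
  · intro h0' h1' hf'
    constructor
    · rw [Ideal.mem_comap]
      have hval : (algebraMap ↥(invariants G) (MvPolynomial (Fin 4) (ZMod 2)))
          (⟨f₃, hf'⟩ : ↥(invariants G)) = f₃ := rfl
      rw [hval, Ideal.map_span, Set.image_insert_eq, Set.image_singleton]
      have hx0 : (algebraMap ↥(invariants G) (MvPolynomial (Fin 4) (ZMod 2)))
          (⟨X 0, h0'⟩ : ↥(invariants G)) = X 0 := rfl
      have hx1 : (algebraMap ↥(invariants G) (MvPolynomial (Fin 4) (ZMod 2)))
          (⟨X 1, h1'⟩ : ↥(invariants G)) = X 1 := rfl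
      rw [hx0, hx1, Ideal.mem_span_pair]
      exact ⟨X 2 * (X 0 + X 2), X 3 * (X 1 + X 3), by simp only [f₃]; ring⟩
    · exact not_span G hG h0' h1' hf'
  · rintro ⟨π, hsurj⟩
    obtain ⟨u, hu⟩ := hsurj 1
    have hsm : ∀ (r : ↥(invariants G)) (x : MvPolynomial (Fin 4) (ZMod 2)),
        r • x = (r : MvPolynomial (Fin 4) (ZMod 2)) * x := fun r x => by
      rw [Algebra.smul_def]; rfl
    have e1 : ((⟨f₃, hf⟩ : ↥(invariants G)) • u : MvPolynomial (Fin 4) (ZMod 2))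
        = (⟨X 0, h0⟩ : ↥(invariants G)) • (X 2 * (X 0 + X 2) * u)
          + (⟨X 1, h1⟩ : ↥(invariants G)) • (X 3 * (X 1 + X 3) * u) := by
      rw [hsm, hsm, hsm]
      simp only [f₃]
      ring
    have fmem : (⟨f₃, hf⟩ : ↥(invariants G)) ∈
        Ideal.span {(⟨X 0, h0⟩ : ↥(invariants G)), (⟨X 1, h1⟩ : ↥(invariants G))} := by
      rw [Ideal.mem_span_pair]
      refine ⟨π (X 2 * (X 0 + X 2) * u), π (X 3 * (X 1 + X 3) * u), ?_⟩
      have e2 : (⟨f₃, hf⟩ : ↥(invariants G)) = π ((⟨f₃, hf⟩ : ↥(invariants G)) • u) := by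
        rw [map_smul, hu, smul_eq_mul, mul_one]
      rw [e2, e1, map_add, map_smul, map_smul, smul_eq_mul, smul_eq_mul]
      ring
    exact not_span G hG h0 h1 hf fmem
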